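/- For fixed real numbers z and u, the function f_z(u) = (1/(2π)) ∫_{-c}^{c} e^{-t²/2} sin(2t(z-u)) / t dt converges, as c → ∞, to (1/2) erf(√2 (z-u)). -/

import Mathlib

open Real Filter

/-- The error function `erf x = (2/√π) ∫_0^x e^{-s²} ds`. -/
noncomputable def erf (x : ℝ) : ℝ :=
  (2 / Real.sqrt Real.pi) * ∫ s in (0:ℝ)..x, Real.exp (-s ^ 2)

open MeasureTheory Complex intervalIntegral

lemma gauss_cos (s : ℝ) : ∫ t : ℝ, Real.exp (-t ^ 2 / 2) * Real.cos (t * s)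
    = Real.sqrt (2 * π) * Real.exp (-s ^ 2 / 2) := by
  have hb : (0:ℝ) < (1/2 : ℂ).re := by norm_num
  have h := fourierIntegral_gaussian (b := (1/2 : ℂ)) hb (s : ℂ)
  have hint : Integrable (fun x : ℝ => cexp (I * s * x) * cexp (-(1/2 : ℂ) * x ^ 2)) := by
    have := integrable_cexp_quadratic (b := (1/2:ℂ)) hb (I * s) 0
    refine this.congr (Filter.Eventually.of_forall fun x => ?_)
    simp only [← Complex.exp_add]; ring_nf
  have hre : ∫ x : ℝ, (cexp (I * s * x) * cexp (-(1/2 : ℂ) * x ^ 2)).re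
      = (∫ x : ℝ, cexp (I * s * x) * cexp (-(1/2 : ℂ) * x ^ 2)).re := by
    simpa using _root_.integral_re hint
  have h1 : ∀ x : ℝ, (cexp (I * s * x) * cexp (-(1/2 : ℂ) * x ^ 2)).re
      = Real.exp (-x ^ 2 / 2) * Real.cos (x * s) := by
    intro x
    have e1 : cexp (-(1/2 : ℂ) * x ^ 2) = (Real.exp (-x ^ 2 / 2) : ℂ) := by
      rw [Complex.ofReal_exp]; push_cast; ring_nf
    have h2 : I * s * x = ((s * x : ℝ) : ℂ) * I := by push_cast; ring
    rw [e1, h2, mul_comm, Complex.re_ofReal_mul, Complex.exp_ofReal_mul_I_re, mul_comm x s]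
  have lhs_eq : ∫ t : ℝ, Real.exp (-t ^ 2 / 2) * Real.cos (t * s)
      = (∫ x : ℝ, cexp (I * s * x) * cexp (-(1/2 : ℂ) * x ^ 2)).re := by
    rw [← hre]; exact integral_congr_ae (Filter.Eventually.of_forall fun x => (h1 x).symm)
  rw [lhs_eq, h]
  have hrhs : ((π : ℂ) / (1/2)) ^ (1/2 : ℂ) = (Real.sqrt (2 * π) : ℂ) := by
    rw [Real.sqrt_eq_rpow, Complex.ofReal_cpow (by positivity)]
    push_cast
    ring_nf
  rw [hrhs]
  have : cexp (-(s:ℂ) ^ 2 / (4 * (1/2))) = (Real.exp (-s ^ 2 / 2) : ℂ) := by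
    rw [Complex.ofReal_exp]; push_cast; ring_nf
  rw [this, ← Complex.ofReal_mul, Complex.ofReal_re]

lemma g_eq (a t : ℝ) :
    (if t = 0 then 2 * a else Real.exp (-t ^ 2 / 2) * Real.sin (2 * t * a) / t)
    = ∫ s in (0:ℝ)..(2*a), Real.exp (-t ^ 2 / 2) * Real.cos (t * s) := by
  rw [intervalIntegral.integral_const_mul]
  by_cases ht : t = 0
  · subst ht
    simp [intervalIntegral.integral_const]
  · rw [if_neg ht]
    have h1 : ∫ s in (0:ℝ)..(2*a), Real.cos (t * s)
        = t⁻¹ • ∫ s in (t*0)..(t*(2*a)), Real.cos s :=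
      intervalIntegral.integral_comp_mul_left (fun s => Real.cos s) ht
    rw [h1, integral_cos, smul_eq_mul]
    rw [mul_zero, Real.sin_zero]
    rw [show t * (2*a) = 2*t*a by ring]
    field_simp
    ring

lemma g_integrable (a : ℝ) :
    Integrable (fun t : ℝ => if t = 0 then 2 * a
      else Real.exp (-t ^ 2 / 2) * Real.sin (2 * t * a) / t) := by
  refine Integrable.mono' ((integrable_exp_neg_mul_sq (by norm_num : (0:ℝ) < 1/2)).const_mul
    (2 * |a|)) ?_ (Filter.Eventually.of_forall fun t => ?_)
  · apply Measurable.aestronglyMeasurable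
    apply Measurable.ite (MeasurableSet.singleton 0 |>.congr ?_) measurable_const
    · fun_prop
    · ext x; simp
  · by_cases ht : t = 0
    · subst ht
      simp [abs_mul]
    · rw [if_neg ht]
      have h1 : |Real.sin (2 * t * a)| ≤ |2 * t * a| := Real.abs_sin_le_abs
      have h2 : |2 * t * a| = 2 * |a| * |t| := by
        rw [abs_mul, abs_mul]; norm_num; ring
      have h3 : (0:ℝ) < |t| := abs_pos.mpr ht
      have h4 : Real.exp (-(1/2) * t^2) = Real.exp (-t^2/2) := by ring_nf
      rw [Real.norm_eq_abs, abs_div, abs_mul, Real.abs_exp, h4, div_le_iff₀ h3]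
      calc Real.exp (-t^2/2) * |Real.sin (2 * t * a)|
          ≤ Real.exp (-t^2/2) * (2 * |a| * |t|) :=
            mul_le_mul_of_nonneg_left (h1.trans h2.le) (Real.exp_pos _).le
        _ = 2 * |a| * Real.exp (-t^2/2) * |t| := by ring

lemma key_nonneg (a : ℝ) (ha : 0 ≤ a) :
    (∫ t : ℝ, if t = 0 then 2 * a
      else Real.exp (-t ^ 2 / 2) * Real.sin (2 * t * a) / t)
    = π * erf (Real.sqrt 2 * a) := by
  have h0 : (0:ℝ) ≤ 2 * a := by linarith
  have hprod : Integrable (Function.uncurry fun t s : ℝ =>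
      Real.exp (-t ^ 2 / 2) * Real.cos (t * s))
      ((volume : Measure ℝ).prod (volume.restrict (Set.Ioc 0 (2 * a)))) := by
    have hb : Integrable (fun p : ℝ × ℝ => Real.exp (-(1/2) * p.1 ^ 2) * (1:ℝ))
        ((volume : Measure ℝ).prod (volume.restrict (Set.Ioc 0 (2 * a)))) :=
      (integrable_exp_neg_mul_sq (by norm_num : (0:ℝ) < 1/2)).mul_prod (integrable_const 1)
    refine hb.mono' ?_ (Filter.Eventually.of_forall fun p => ?_)
    · exact Continuous.aestronglyMeasurable (by fun_prop)
    · simp only [Function.uncurry, Real.norm_eq_abs, abs_mul, Real.abs_exp, mul_one]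
      have : Real.exp (-(1/2) * p.1 ^ 2) = Real.exp (-p.1 ^ 2 / 2) := by ring_nf
      rw [this]
      exact (mul_le_mul_of_nonneg_left (Real.abs_cos_le_one _) (Real.exp_pos _).le).trans_eq (mul_one _)
  calc (∫ t : ℝ, if t = 0 then 2 * a
        else Real.exp (-t ^ 2 / 2) * Real.sin (2 * t * a) / t)
      = ∫ t : ℝ, ∫ s in Set.Ioc (0:ℝ) (2 * a), Real.exp (-t ^ 2 / 2) * Real.cos (t * s) := by
        refine integral_congr_ae (Filter.Eventually.of_forall fun t => ?_)
        dsimp only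
        rw [g_eq, intervalIntegral.integral_of_le h0]
    _ = ∫ s in Set.Ioc (0:ℝ) (2 * a), ∫ t : ℝ, Real.exp (-t ^ 2 / 2) * Real.cos (t * s) :=
        MeasureTheory.integral_integral_swap hprod
    _ = ∫ s in Set.Ioc (0:ℝ) (2 * a), Real.sqrt (2 * π) * Real.exp (-s ^ 2 / 2) := by
        simp only [gauss_cos]
    _ = Real.sqrt (2 * π) * ∫ s in (0:ℝ)..(2 * a), Real.exp (-s ^ 2 / 2) := by
        rw [← intervalIntegral.integral_of_le h0, intervalIntegral.integral_const_mul]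
    _ = Real.sqrt (2 * π) * (Real.sqrt 2 * ∫ r in (0:ℝ)..(Real.sqrt 2 * a), Real.exp (-r ^ 2)) := by
        congr 1
        have h2 : Real.sqrt 2 ≠ 0 := by positivity
        have hc : ((Real.sqrt 2)⁻¹ : ℝ) ≠ 0 := inv_ne_zero h2
        have := intervalIntegral.integral_comp_mul_right
          (f := fun r => Real.exp (-r ^ 2)) (a := (0:ℝ)) (b := 2 * a) hc
        have hpt : ∀ x : ℝ, Real.exp (-(x * (Real.sqrt 2)⁻¹) ^ 2) = Real.exp (-x ^ 2 / 2) := by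
          intro x
          congr 1
          rw [mul_pow, inv_pow, Real.sq_sqrt (by norm_num : (0:ℝ) ≤ 2)]
          ring
        have h2m : Real.sqrt 2 * Real.sqrt 2 = 2 := Real.mul_self_sqrt (by norm_num)
        have hend : 2 * a * (Real.sqrt 2)⁻¹ = Real.sqrt 2 * a := by
          have h2i : (2:ℝ) * (Real.sqrt 2)⁻¹ = Real.sqrt 2 := by
            nth_rewrite 1 [← h2m]; exact mul_inv_cancel_right₀ h2 _
          rw [mul_comm 2 a, mul_assoc, h2i, mul_comm]
        calc (∫ s in (0:ℝ)..(2 * a), Real.exp (-s ^ 2 / 2))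
            = ∫ s in (0:ℝ)..(2 * a), Real.exp (-(s * (Real.sqrt 2)⁻¹) ^ 2) :=
              intervalIntegral.integral_congr (fun x _ => (hpt x).symm)
          _ = ((Real.sqrt 2)⁻¹)⁻¹ • ∫ x in (0 * (Real.sqrt 2)⁻¹)..(2 * a * (Real.sqrt 2)⁻¹),
                Real.exp (-x ^ 2) := this
          _ = Real.sqrt 2 * ∫ r in (0:ℝ)..(Real.sqrt 2 * a), Real.exp (-r ^ 2) := by
              rw [inv_inv, smul_eq_mul, zero_mul, hend]
    _ = π * erf (Real.sqrt 2 * a) := by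
        rw [erf]
        have hπ : Real.sqrt π * Real.sqrt π = π := Real.mul_self_sqrt Real.pi_pos.le
        have h2 : Real.sqrt 2 * Real.sqrt 2 = 2 := Real.mul_self_sqrt (by norm_num)
        have hs : Real.sqrt (2 * π) = Real.sqrt 2 * Real.sqrt π :=
          Real.sqrt_mul (by norm_num) π
        have hπ0 : Real.sqrt π ≠ 0 := by positivity
        field_simp
        linear_combination (Real.sqrt 2 * (∫ r in (0:ℝ)..(Real.sqrt 2 * a), Real.exp (-r ^ 2)) *
            Real.sqrt π) * hs + (∫ r in (0:ℝ)..(Real.sqrt 2 * a), Real.exp (-r ^ 2)) *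
            Real.sqrt π * Real.sqrt π * h2 +
          2 * (∫ r in (0:ℝ)..(Real.sqrt 2 * a), Real.exp (-r ^ 2)) * hπ

lemma erf_odd (x : ℝ) : erf (-x) = -erf x := by
  unfold erf
  have h : ∫ s in (0:ℝ)..(-x), Real.exp (-s ^ 2) = -∫ s in (0:ℝ)..x, Real.exp (-s ^ 2) := by
    have h1 : ∫ s in (0:ℝ)..x, Real.exp (-s ^ 2) = ∫ s in (0:ℝ)..x, Real.exp (-(-s) ^ 2) := by
      simp
    rw [h1, intervalIntegral.integral_comp_neg (fun s => Real.exp (-s ^ 2)), neg_zero,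
      intervalIntegral.integral_symm]
  rw [h]; ring

lemma key (a : ℝ) :
    (∫ t : ℝ, if t = 0 then 2 * a
      else Real.exp (-t ^ 2 / 2) * Real.sin (2 * t * a) / t)
    = π * erf (Real.sqrt 2 * a) := by
  rcases le_or_gt 0 a with ha | ha
  · exact key_nonneg a ha
  · have hneg : ∀ t : ℝ, (if t = 0 then 2 * a
        else Real.exp (-t ^ 2 / 2) * Real.sin (2 * t * a) / t)
        = -(if t = 0 then 2 * (-a)
          else Real.exp (-t ^ 2 / 2) * Real.sin (2 * t * (-a)) / t) := by
      intro t
      by_cases ht : t = 0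
      · simp [ht]
      · rw [if_neg ht, if_neg ht, show 2 * t * (-a) = -(2 * t * a) by ring, Real.sin_neg]
        ring
    rw [integral_congr_ae (Filter.Eventually.of_forall hneg), MeasureTheory.integral_neg,
      key_nonneg (-a) (by linarith), show Real.sqrt 2 * a = -(Real.sqrt 2 * (-a)) by ring,
      erf_odd]
    ring


/-- As `c → ∞`, `(1/(2π)) ∫_{-c}^{c} e^{-t²/2} sin(2t(z-u))/t dt → (1/2) erf(√2 (z-u))`,
the integrand being extended continuously at `t = 0` by its limit `2(z-u)`. -/
theorem stmt_0 (z u : ℝ) :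
    Tendsto (fun c : ℝ =>
        (1 / (2 * Real.pi)) * ∫ t in (-c)..c,
          (if t = 0 then 2 * (z - u)
           else Real.exp (-t ^ 2 / 2) * Real.sin (2 * t * (z - u)) / t))
      atTop (nhds ((1 / 2) * erf (Real.sqrt 2 * (z - u)))) := by
  set a := z - u
  have h := MeasureTheory.intervalIntegral_tendsto_integral (g_integrable a)
    tendsto_neg_atTop_atBot tendsto_id
  have h2 := h.const_mul (1 / (2 * Real.pi))
  rw [key a] at h2
  have : 1 / (2 * Real.pi) * (π * erf (Real.sqrt 2 * a)) = 1 / 2 * erf (Real.sqrt 2 * a) := by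
    field_simp
  rwa [this] at h2
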